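/- Let L ≥ 1, let α be an L×L complex matrix with ‖α‖ < 1, let U₁, V₁, U₂, V₂ ∈ U(L), and let z ∈ ℂ with |z| = 1. Then the transfer matrix T(z) belongs to U(L,L), i.e. T(z)* 𝓛 T(z) = 𝓛. -/

import Mathlib

open Matrix Polynomial
open scoped Matrix.Norms.L2Operator ComplexOrder

section Aux
variable {n : Type*} [Fintype n] [DecidableEq n]

/-- Conjugation by a unitary matrix as an ℝ-algebra homomorphism. -/
noncomputable def conjAlgHom (U : Matrix n n ℂ) (h1 : U * Uᴴ = 1) (h2 : Uᴴ * U = 1) :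
    Matrix n n ℂ →ₐ[ℝ] Matrix n n ℂ where
  toFun M := U * M * Uᴴ
  map_one' := by simpa using h1
  map_mul' M N := by
    show U * (M * N) * Uᴴ = (U * M * Uᴴ) * (U * N * Uᴴ)
    have : U * (M * N) * Uᴴ = (U * M) * (Uᴴ * U) * (N * Uᴴ) := by
      rw [h2]; noncomm_ring
    rw [this]; noncomm_ring
  map_zero' := by simp
  map_add' M N := by noncomm_ring
  commutes' r := by
    simp only [Algebra.algebraMap_eq_smul_one]
    rw [Matrix.mul_smul, mul_one, Matrix.smul_mul, h1]

lemma aeval_eq_self (M : Matrix n n ℂ) (hM : M.IsHermitian) (r : ℝ[X])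
    (h : ∀ i, r.eval (hM.eigenvalues i) = hM.eigenvalues i) :
    aeval M r = M := by
  have h1 : (hM.eigenvectorUnitary : Matrix n n ℂ) * (hM.eigenvectorUnitary : Matrix n n ℂ)ᴴ = 1 :=
    Matrix.mem_unitaryGroup_iff.mp hM.eigenvectorUnitary.2
  have h2 : (hM.eigenvectorUnitary : Matrix n n ℂ)ᴴ * (hM.eigenvectorUnitary : Matrix n n ℂ) = 1 :=
    Matrix.mem_unitaryGroup_iff'.mp hM.eigenvectorUnitary.2
  have key2 : aeval (diagonal (RCLike.ofReal ∘ hM.eigenvalues) : Matrix n n ℂ) r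
      = diagonal (RCLike.ofReal ∘ hM.eigenvalues) := by
    have hd : (diagonal (RCLike.ofReal ∘ hM.eigenvalues) : Matrix n n ℂ) =
        (diagonalAlgHom (n := n) (α := ℂ) ℝ) (RCLike.ofReal ∘ hM.eigenvalues) := rfl
    rw [hd, aeval_algHom_apply (diagonalAlgHom (n := n) (α := ℂ) ℝ)]
    congr 1
    funext i
    have e1 : (aeval (RCLike.ofReal ∘ hM.eigenvalues : n → ℂ) r) i
        = aeval ((RCLike.ofReal ∘ hM.eigenvalues : n → ℂ) i) r :=
      (aeval_algHom_apply (Pi.evalAlgHom ℝ (fun _ => ℂ) i) _ r).symm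
    rw [e1]
    have e2 : ((RCLike.ofReal ∘ hM.eigenvalues) i : ℂ) = algebraMap ℝ ℂ (hM.eigenvalues i) := rfl
    rw [e2, aeval_algebraMap_apply_eq_algebraMap_eval, h i]
  conv_lhs => rw [hM.spectral_theorem]
  have key : aeval ((conjAlgHom (hM.eigenvectorUnitary : Matrix n n ℂ) h1 h2)
        (diagonal (RCLike.ofReal ∘ hM.eigenvalues))) r
      = (conjAlgHom _ h1 h2) (aeval (diagonal (RCLike.ofReal ∘ hM.eigenvalues)) r) :=
    aeval_algHom_apply _ _ _
  have this2 : (Unitary.conjStarAlgAut ℂ (Matrix n n ℂ) hM.eigenvectorUnitary)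
      (diagonal (RCLike.ofReal ∘ hM.eigenvalues))
      = (conjAlgHom (hM.eigenvectorUnitary : Matrix n n ℂ) h1 h2)
        (diagonal (RCLike.ofReal ∘ hM.eigenvalues)) := rfl
  rw [this2, key, key2, ← this2, ← hM.spectral_theorem]

lemma comm_aeval {R : Type*} [Ring R] [Algebra ℝ R] {x a b : R} (h : x * a = b * x)
    (p : ℝ[X]) : x * aeval a p = aeval b p * x := by
  have hpow : ∀ m : ℕ, x * a ^ m = b ^ m * x := by
    intro m
    induction m with
    | zero => simp
    | succ m ih => rw [pow_succ, pow_succ, ← mul_assoc, ih, mul_assoc, mul_assoc, h, ← mul_assoc]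
  induction p using Polynomial.induction_on' with
  | add p q hp hq => simp [mul_add, add_mul, hp, hq]
  | monomial m c =>
      rw [aeval_monomial, aeval_monomial, ← mul_assoc x, ← Algebra.commutes c x,
        mul_assoc, hpow m, ← mul_assoc]
end Aux


lemma exists_interp (S : Finset ℝ) (h0 : ∀ x ∈ S, 0 ≤ x) :
    ∃ q : ℝ[X], ∀ x ∈ S, q.eval (x ^ 2) = x := by
  have hinj : Set.InjOn (fun x : ℝ => x ^ 2) S := by
    intro x hx y hy hxy
    simp only at hxy
    nlinarith [h0 x hx, h0 y hy]
  refine ⟨Lagrange.interpolate S (fun x => x ^ 2) id, fun x hx => ?_⟩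
  have := Lagrange.eval_interpolate_at_node (v := fun x : ℝ => x ^ 2) (s := S) (i := x) id hinj hx
  simpa using this


/-- The block matrix `T₀(z) = [[z⁻¹ ρ̃⁻¹, ρ̃⁻¹ α*], [α ρ̃⁻¹, z ρ⁻¹]]`, where `ρ` (resp. `ρt`)
stands for the positive semidefinite square root of `1 - α αᴴ` (resp. `1 - αᴴ α`), passed as
arguments. -/
noncomputable def T0mat (L : ℕ) (α ρ ρt : Matrix (Fin L) (Fin L) ℂ) (z : ℂ) :
    Matrix (Fin L ⊕ Fin L) (Fin L ⊕ Fin L) ℂ :=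
  fromBlocks (z⁻¹ • ρt⁻¹) (ρt⁻¹ * αᴴ) (α * ρt⁻¹) (z • ρ⁻¹)

/-- The transfer matrix `T(z) = diag(V₂, U₂ᴴ) · T₀(z) · diag(V₁, U₁ᴴ) · T₀(1)`. -/
noncomputable def transferMat (L : ℕ) (α ρ ρt U₁ V₁ U₂ V₂ : Matrix (Fin L) (Fin L) ℂ) (z : ℂ) :
    Matrix (Fin L ⊕ Fin L) (Fin L ⊕ Fin L) ℂ :=
  fromBlocks V₂ 0 0 U₂ᴴ * T0mat L α ρ ρt z * fromBlocks V₁ 0 0 U₁ᴴ * T0mat L α ρ ρt 1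

/-- Let `L ≥ 1`, `α` an `L×L` complex matrix with `‖α‖ < 1` (operator norm
induced by the Euclidean norm), `U₁, V₁, U₂, V₂ ∈ U(L)` and `z ∈ ℂ` with `|z| = 1`. Then the
transfer matrix `T(z)` belongs to `U(L,L)`, i.e. `T(z)ᴴ 𝓛 T(z) = 𝓛` with `𝓛 = diag(I, -I)`. -/
theorem stmt_6 (L : ℕ) (hL : 1 ≤ L) (α ρ ρt U₁ V₁ U₂ V₂ : Matrix (Fin L) (Fin L) ℂ)
    (hα : ‖α‖ < 1)
    (hρ : ρ.PosSemidef) (hρ2 : ρ * ρ = 1 - α * αᴴ)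
    (hρt : ρt.PosSemidef) (hρt2 : ρt * ρt = 1 - αᴴ * α)
    (hU₁ : U₁ ∈ Matrix.unitaryGroup (Fin L) ℂ) (hV₁ : V₁ ∈ Matrix.unitaryGroup (Fin L) ℂ)
    (hU₂ : U₂ ∈ Matrix.unitaryGroup (Fin L) ℂ) (hV₂ : V₂ ∈ Matrix.unitaryGroup (Fin L) ℂ)
    (z : ℂ) (hz : ‖z‖ = 1) :
    (transferMat L α ρ ρt U₁ V₁ U₂ V₂ z)ᴴ *
        fromBlocks (1 : Matrix (Fin L) (Fin L) ℂ) 0 0 (-1) *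
        transferMat L α ρ ρt U₁ V₁ U₂ V₂ z =
      fromBlocks (1 : Matrix (Fin L) (Fin L) ℂ) 0 0 (-1) := by
  classical
  set J : Matrix (Fin L ⊕ Fin L) (Fin L ⊕ Fin L) ℂ := fromBlocks 1 0 0 (-1) with hJ
  -- invertibility
  have hast : ‖αᴴ‖ = ‖α‖ := Matrix.l2_opNorm_conjTranspose α
  have hu1 : IsUnit (1 - α * αᴴ) := by
    have h : ‖α * αᴴ‖ < 1 := by
      calc ‖α * αᴴ‖ ≤ ‖α‖ * ‖αᴴ‖ := norm_mul_le _ _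
      _ < 1 := by rw [hast]; nlinarith [norm_nonneg α]
    exact ⟨Units.oneSub _ h, rfl⟩
  have hu2 : IsUnit (1 - αᴴ * α) := by
    have h : ‖αᴴ * α‖ < 1 := by
      calc ‖αᴴ * α‖ ≤ ‖αᴴ‖ * ‖α‖ := norm_mul_le _ _
      _ < 1 := by rw [hast]; nlinarith [norm_nonneg α]
    exact ⟨Units.oneSub _ h, rfl⟩
  have hρd : IsUnit ρ.det := by
    have := (Matrix.isUnit_iff_isUnit_det _).mp (hρ2 ▸ hu1)
    rw [det_mul] at this
    exact isUnit_of_mul_isUnit_left this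
  have hρtd : IsUnit ρt.det := by
    have := (Matrix.isUnit_iff_isUnit_det _).mp (hρt2 ▸ hu2)
    rw [det_mul] at this
    exact isUnit_of_mul_isUnit_left this
  have hr1 : ρ⁻¹ * ρ = 1 := nonsing_inv_mul ρ hρd
  have hr2 : ρ * ρ⁻¹ = 1 := mul_nonsing_inv ρ hρd
  have ht1 : ρt⁻¹ * ρt = 1 := nonsing_inv_mul ρt hρtd
  have ht2 : ρt * ρt⁻¹ = 1 := mul_nonsing_inv ρt hρtd
  -- intertwining
  have hcomm : αᴴ * (ρ * ρ) = (ρt * ρt) * αᴴ := by rw [hρ2, hρt2]; noncomm_ring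
  set S : Finset ℝ :=
    Finset.image hρ.1.eigenvalues Finset.univ ∪ Finset.image hρt.1.eigenvalues Finset.univ
    with hS
  have hS0 : ∀ x ∈ S, (0:ℝ) ≤ x := by
    intro x hx
    simp only [hS, Finset.mem_union, Finset.mem_image, Finset.mem_univ, true_and] at hx
    rcases hx with ⟨i, rfl⟩ | ⟨i, rfl⟩
    · exact hρ.eigenvalues_nonneg i
    · exact hρt.eigenvalues_nonneg i
  obtain ⟨q, hq⟩ := exists_interp S hS0
  set r : ℝ[X] := q.comp (X ^ 2) with hrdef
  have hr : ∀ x ∈ S, r.eval x = x := by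
    intro x hx
    simp only [hrdef, eval_comp, eval_pow, eval_X]
    exact hq x hx
  have hρr : aeval ρ r = ρ := aeval_eq_self ρ hρ.1 r (fun i => hr _ (by
    simp only [hS, Finset.mem_union, Finset.mem_image, Finset.mem_univ, true_and]
    exact Or.inl ⟨i, rfl⟩))
  have hρtr : aeval ρt r = ρt := aeval_eq_self ρt hρt.1 r (fun i => hr _ (by
    simp only [hS, Finset.mem_union, Finset.mem_image, Finset.mem_univ, true_and]
    exact Or.inr ⟨i, rfl⟩))
  have hcompρ : aeval (ρ * ρ) q = ρ := by
    have e : (aeval ρ) ((X : ℝ[X]) ^ 2) = ρ * ρ := by rw [map_pow, aeval_X, pow_two]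
    rw [← e, ← aeval_comp, ← hrdef, hρr]
  have hcompρt : aeval (ρt * ρt) q = ρt := by
    have e : (aeval ρt) ((X : ℝ[X]) ^ 2) = ρt * ρt := by rw [map_pow, aeval_X, pow_two]
    rw [← e, ← aeval_comp, ← hrdef, hρtr]
  have key : αᴴ * ρ = ρt * αᴴ := by
    have := comm_aeval hcomm q
    rwa [hcompρ, hcompρt] at this
  have key2 : α * ρt = ρ * α := by
    have := congrArg conjTranspose key
    simpa [conjTranspose_mul, hρ.1.eq, hρt.1.eq] using this.symm
  have hti : ρt⁻¹ * αᴴ = αᴴ * ρ⁻¹ := by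
    calc ρt⁻¹ * αᴴ = ρt⁻¹ * αᴴ * (ρ * ρ⁻¹) := by rw [hr2, mul_one]
    _ = ρt⁻¹ * (αᴴ * ρ) * ρ⁻¹ := by noncomm_ring
    _ = ρt⁻¹ * (ρt * αᴴ) * ρ⁻¹ := by rw [key]
    _ = (ρt⁻¹ * ρt) * (αᴴ * ρ⁻¹) := by noncomm_ring
    _ = αᴴ * ρ⁻¹ := by rw [ht1, one_mul]
  have hai : α * ρt⁻¹ = ρ⁻¹ * α := by
    calc α * ρt⁻¹ = (ρ⁻¹ * ρ) * (α * ρt⁻¹) := by rw [hr1, one_mul]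
    _ = ρ⁻¹ * (ρ * α) * ρt⁻¹ := by noncomm_ring
    _ = ρ⁻¹ * (α * ρt) * ρt⁻¹ := by rw [key2]
    _ = (ρ⁻¹ * α) * (ρt * ρt⁻¹) := by noncomm_ring
    _ = ρ⁻¹ * α := by rw [ht2, mul_one]
  have hriH : ρ⁻¹ᴴ = ρ⁻¹ := by rw [conjTranspose_nonsing_inv, hρ.1.eq]
  have htiH : ρt⁻¹ᴴ = ρt⁻¹ := by rw [conjTranspose_nonsing_inv, hρt.1.eq]
  -- T0 preserves J
  have hT0 : ∀ w : ℂ, w ≠ 0 → (starRingEnd ℂ) w = w⁻¹ →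
      (T0mat L α ρ ρt w)ᴴ * J * T0mat L α ρ ρt w = J := by
    intro w hw0 hwc
    have hwc' : star w = w⁻¹ := hwc
    have et : ρt⁻¹ * (1 - αᴴ * α) * ρt⁻¹ = 1 := by
      rw [← hρt2]
      calc ρt⁻¹ * (ρt * ρt) * ρt⁻¹ = (ρt⁻¹ * ρt) * (ρt * ρt⁻¹) := by noncomm_ring
      _ = 1 := by rw [ht1, ht2, one_mul]
    have er : ρ⁻¹ * (1 - α * αᴴ) * ρ⁻¹ = 1 := by
      rw [← hρ2]
      calc ρ⁻¹ * (ρ * ρ) * ρ⁻¹ = (ρ⁻¹ * ρ) * (ρ * ρ⁻¹) := by noncomm_ring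
      _ = 1 := by rw [hr1, hr2, one_mul]
    have h2 : ρt⁻¹ * (ρt⁻¹ * αᴴ) = (ρt⁻¹ * αᴴ) * ρ⁻¹ := by
      conv_lhs => rw [hti]
      rw [← mul_assoc]
    have h3 : (α * ρt⁻¹) * ρt⁻¹ = ρ⁻¹ * (α * ρt⁻¹) := by
      conv_lhs => rw [hai]
      rw [mul_assoc]
    rw [T0mat, hJ, fromBlocks_conjTranspose, fromBlocks_multiply, fromBlocks_multiply]
    rw [fromBlocks_inj]
    refine ⟨?_, ?_, ?_, ?_⟩
    · simp only [conjTranspose_smul, conjTranspose_mul, conjTranspose_conjTranspose, htiH, hriH,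
        Matrix.mul_one, Matrix.one_mul, Matrix.mul_zero, Matrix.zero_mul, smul_zero, add_zero,
        zero_add, Matrix.mul_neg, Matrix.neg_mul, smul_mul_assoc, mul_smul_comm, smul_smul,
        star_inv₀, hwc', inv_inv, mul_inv_cancel₀ hw0, inv_mul_cancel₀ hw0, one_smul]
      rw [← et]
      noncomm_ring
    · simp only [conjTranspose_smul, conjTranspose_mul, conjTranspose_conjTranspose, htiH, hriH,
        Matrix.mul_one, Matrix.one_mul, Matrix.mul_zero, Matrix.zero_mul, smul_zero, add_zero,
        zero_add, Matrix.mul_neg, Matrix.neg_mul, smul_mul_assoc, mul_smul_comm, smul_smul,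
        star_inv₀, hwc', inv_inv, mul_inv_cancel₀ hw0, inv_mul_cancel₀ hw0, one_smul]
      rw [h2]
      simp
    · simp only [conjTranspose_smul, conjTranspose_mul, conjTranspose_conjTranspose, htiH, hriH,
        Matrix.mul_one, Matrix.one_mul, Matrix.mul_zero, Matrix.zero_mul, smul_zero, add_zero,
        zero_add, Matrix.mul_neg, Matrix.neg_mul, smul_mul_assoc, mul_smul_comm, smul_smul,
        star_inv₀, hwc', inv_inv, mul_inv_cancel₀ hw0, inv_mul_cancel₀ hw0, one_smul]
      rw [h3]
      simp
    · simp only [conjTranspose_smul, conjTranspose_mul, conjTranspose_conjTranspose, htiH, hriH,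
        Matrix.mul_one, Matrix.one_mul, Matrix.mul_zero, Matrix.zero_mul, smul_zero, add_zero,
        zero_add, Matrix.mul_neg, Matrix.neg_mul, smul_mul_assoc, mul_smul_comm, smul_smul,
        star_inv₀, hwc', inv_inv, mul_inv_cancel₀ hw0, inv_mul_cancel₀ hw0, one_smul]
      rw [hai, hti]
      have hneg : (-1 : Matrix (Fin L) (Fin L) ℂ) = -(ρ⁻¹ * (1 - α * αᴴ) * ρ⁻¹) := by rw [er]
      rw [hneg]
      noncomm_ring
  have hz0 : z ≠ 0 := by
    intro h
    rw [h] at hz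
    simp at hz
  have hzc : (starRingEnd ℂ) z = z⁻¹ := by
    have h1 : z * (starRingEnd ℂ) z = 1 := by
      rw [Complex.mul_conj, Complex.normSq_eq_norm_sq, hz]
      norm_num
    exact (inv_eq_of_mul_eq_one_right h1).symm
  have step : ∀ A B : Matrix (Fin L ⊕ Fin L) (Fin L ⊕ Fin L) ℂ,
      Aᴴ * J * A = J → Bᴴ * J * B = J → (A * B)ᴴ * J * (A * B) = J := by
    intro A B hA hB
    calc (A * B)ᴴ * J * (A * B) = Bᴴ * (Aᴴ * J * A) * B := by
          rw [conjTranspose_mul]; noncomm_ring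
    _ = J := by rw [hA]; exact hB
  have hdiag : ∀ V U : Matrix (Fin L) (Fin L) ℂ, V ∈ Matrix.unitaryGroup (Fin L) ℂ →
      U ∈ Matrix.unitaryGroup (Fin L) ℂ →
      (fromBlocks V 0 0 Uᴴ)ᴴ * J * fromBlocks V 0 0 Uᴴ = J := by
    intro V U hV hU
    have hV' : Vᴴ * V = 1 := by
      simpa [Matrix.star_eq_conjTranspose] using Matrix.mem_unitaryGroup_iff'.mp hV
    have hU' : U * Uᴴ = 1 := by
      simpa [Matrix.star_eq_conjTranspose] using Matrix.mem_unitaryGroup_iff.mp hU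
    rw [hJ, fromBlocks_conjTranspose, fromBlocks_multiply, fromBlocks_multiply, fromBlocks_inj]
    refine ⟨?_, ?_, ?_, ?_⟩ <;> simp [hV', hU']
  rw [transferMat]
  exact step _ _ (step _ _ (step _ _ (hdiag V₂ U₂ hV₂ hU₂) (hT0 z hz0 hzc))
    (hdiag V₁ U₁ hV₁ hU₁)) (hT0 1 one_ne_zero (by simp))
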